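/- Let q₁ = [A₁,B₁,C₁] and q₂ = [A₂,B₂,C₂] be PIBQFs with discriminants D₁, D₂ satisfying B_Δ(q₁,q₂)² < D₁D₂, and set Wᵢ := [[−Bᵢ, −2Cᵢ],[2Aᵢ, Bᵢ]] for i = 1,2. Then det(W₁W₂) = D₁D₂ > 0, and the unique point z of the upper half-plane lying on both root geodesics ℓ_{q₁} and ℓ_{q₂} is fixed by the Möbius action of W₁W₂: writing W₁W₂ = [[a,b],[c,d]], one has cz + d ≠ 0 and (az + b)/(cz + d) = z. -/
import Mathlib


/-- A binary quadratic form `[A,B,C]`, encoded as a triple of integers. -/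
abbrev BQF := ℤ × ℤ × ℤ

/-- The discriminant `B² - 4AC` of a binary quadratic form `[A,B,C]`. -/
def disc (q : BQF) : ℤ := q.2.1 ^ 2 - 4 * q.1 * q.2.2

/-- A binary quadratic form is primitive if `gcd(A,B,C) = 1`. -/
def IsPrimitiveBQF (q : BQF) : Prop := Int.gcd q.1 (Int.gcd q.2.1 q.2.2) = 1

/-- A primitive indefinite binary quadratic form: primitive, of positive
nonsquare discriminant. -/
def IsPIBQF (q : BQF) : Prop := IsPrimitiveBQF q ∧ 0 < disc q ∧ ¬ IsSquare (disc q)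

abbrev SL2Z := Matrix.SpecialLinearGroup (Fin 2) ℤ

/-- The action of `SL(2,ℤ)` on binary quadratic forms:
`(γ ∘ q)(x,y) = q(ax + by, cx + dy)`. -/
def actForm (γ : SL2Z) (q : BQF) : BQF :=
  ((q.1 * (γ.1 0 0)^2 + q.2.1 * (γ.1 0 0) * (γ.1 1 0) + q.2.2 * (γ.1 1 0)^2),
   (2 * q.1 * (γ.1 0 0) * (γ.1 0 1) + q.2.1 * ((γ.1 0 0) * (γ.1 1 1) + (γ.1 0 1) * (γ.1 1 0))
      + 2 * q.2.2 * (γ.1 1 0) * (γ.1 1 1)),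
   (q.1 * (γ.1 0 1)^2 + q.2.1 * (γ.1 0 1) * (γ.1 1 1) + q.2.2 * (γ.1 1 1)^2))

/-- Equivalence of binary quadratic forms under `SL(2,ℤ)`. -/
def equivF (q q' : BQF) : Prop := ∃ γ : SL2Z, actForm γ q = q'

/-- `B_Δ(q₁,q₂) = B₁B₂ - 2A₁C₂ - 2A₂C₁`. -/
def BΔ (q₁ q₂ : BQF) : ℤ := q₁.2.1 * q₂.2.1 - 2 * q₁.1 * q₂.2.2 - 2 * q₂.1 * q₁.2.2

/-- A fundamental discriminant. -/
def IsFundamentalDisc (D : ℤ) : Prop :=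
  (D % 4 = 1 ∧ Squarefree D) ∨
    (∃ m : ℤ, D = 4 * m ∧ Squarefree m ∧ (m % 4 = 2 ∨ m % 4 = 3))

/-- The Kronecker symbol `(a / p)` for a prime `p`. -/
def kron (a : ℤ) (p : ℕ) : ℤ :=
  if p = 2 then (if a % 2 = 0 then 0 else if a % 8 = 1 ∨ a % 8 = 7 then 1 else -1)
  else jacobiSym a p

/-- `ε(p)`: the nonzero value among the Kronecker symbols `(D₁/p)`, `(D₂/p)`. -/
def epsP (D₁ D₂ : ℤ) (p : ℕ) : ℤ := if kron D₁ p = 0 then kron D₂ p else kron D₁ p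

/-- The multiplicative extension of `ε` to positive integers. -/
def epsMul (D₁ D₂ : ℤ) (d : ℕ) : ℤ :=
  d.factorization.prod fun p k => (epsP D₁ D₂ p) ^ k

/-- Pairs of primitive forms of discriminants `D₁, D₂` with `B_Δ = n`. -/
def PairSet (D₁ D₂ n : ℤ) : Type :=
  {p : BQF × BQF // IsPrimitiveBQF p.1 ∧ IsPrimitiveBQF p.2 ∧
    disc p.1 = D₁ ∧ disc p.2 = D₂ ∧ BΔ p.1 p.2 = n}

/-- Simultaneous `SL(2,ℤ)`-equivalence of pairs. -/
def pairRel (D₁ D₂ n : ℤ) (x y : PairSet D₁ D₂ n) : Prop :=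
  ∃ γ : SL2Z, actForm γ x.1.1 = y.1.1 ∧ actForm γ x.1.2 = y.1.2

/-- `p(n)`: the number of simultaneous equivalence classes of pairs of primitive
forms of discriminants `D₁, D₂` with `B_Δ = n`. -/
noncomputable def pCount (D₁ D₂ n : ℤ) : ℕ := Nat.card (Quot (pairRel D₁ D₂ n))

/-- The root geodesic of an indefinite form, as a subset of the upper half plane. -/
def rootGeodesic (q : BQF) : Set ℂ :=
  {z : ℂ | 0 < z.im ∧
    (q.1 : ℝ) * Complex.normSq z + (q.2.1 : ℝ) * z.re + (q.2.2 : ℝ) = 0}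

/-- The first root `(-B + √D)/(2A)` of a PIBQF. -/
noncomputable def firstRoot (q : BQF) : ℝ :=
  (-(q.2.1 : ℝ) + Real.sqrt (disc q)) / (2 * q.1)

/-- The second root `(-B - √D)/(2A)` of a PIBQF. -/
noncomputable def secondRoot (q : BQF) : ℝ :=
  (-(q.2.1 : ℝ) - Real.sqrt (disc q)) / (2 * q.1)


/-- The matrix `[[-B, -2C],[2A, B]]` attached to a form `q = [A,B,C]`. -/
def Wmat (q : BQF) : Matrix (Fin 2) (Fin 2) ℤ :=
  !![-q.2.1, -2 * q.2.2; 2 * q.1, q.2.1]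

/-- Proposition 6(iii)(b) of the paper, specialized.
With `Wᵢ = [[-Bᵢ,-2Cᵢ],[2Aᵢ,Bᵢ]]`, `det(W₁W₂) = D₁D₂ > 0`, and the unique
intersection point of the root geodesics is fixed by the Möbius action of
`W₁W₂`. -/
theorem intersection_point_fixed_by_W₁W₂
    (q₁ q₂ : BQF) (h₁ : IsPIBQF q₁) (h₂ : IsPIBQF q₂)
    (h : (BΔ q₁ q₂) ^ 2 < disc q₁ * disc q₂) :
    (Wmat q₁ * Wmat q₂).det = disc q₁ * disc q₂ ∧
    0 < disc q₁ * disc q₂ ∧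
    ∀ z : ℂ, z ∈ rootGeodesic q₁ → z ∈ rootGeodesic q₂ →
      (((Wmat q₁ * Wmat q₂) 1 0 : ℂ) * z + ((Wmat q₁ * Wmat q₂) 1 1 : ℂ) ≠ 0 ∧
        (((Wmat q₁ * Wmat q₂) 0 0 : ℂ) * z + ((Wmat q₁ * Wmat q₂) 0 1 : ℂ)) /
          (((Wmat q₁ * Wmat q₂) 1 0 : ℂ) * z + ((Wmat q₁ * Wmat q₂) 1 1 : ℂ)) = z) := by
  obtain ⟨-, hD₁, -⟩ := h₁
  obtain ⟨-, hD₂, -⟩ := h₂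
  have hM00 : (Wmat q₁ * Wmat q₂) 0 0 = q₁.2.1 * q₂.2.1 - 4 * q₁.2.2 * q₂.1 := by
    simp [Wmat, Matrix.mul_apply, Fin.sum_univ_two]; ring
  have hM01 : (Wmat q₁ * Wmat q₂) 0 1 = 2 * q₁.2.1 * q₂.2.2 - 2 * q₁.2.2 * q₂.2.1 := by
    simp [Wmat, Matrix.mul_apply, Fin.sum_univ_two]; ring
  have hM10 : (Wmat q₁ * Wmat q₂) 1 0 = 2 * q₂.1 * q₁.2.1 - 2 * q₁.1 * q₂.2.1 := by
    simp [Wmat, Matrix.mul_apply, Fin.sum_univ_two]; ring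
  have hM11 : (Wmat q₁ * Wmat q₂) 1 1 = q₁.2.1 * q₂.2.1 - 4 * q₁.1 * q₂.2.2 := by
    simp [Wmat, Matrix.mul_apply, Fin.sum_univ_two]; ring
  have hdet : (Wmat q₁ * Wmat q₂).det = disc q₁ * disc q₂ := by
    rw [Matrix.det_mul]
    simp only [Wmat, Matrix.det_fin_two_of, disc]
    ring
  have hpos : 0 < disc q₁ * disc q₂ := mul_pos hD₁ hD₂
  refine ⟨hdet, hpos, ?_⟩
  intro z hz₁ hz₂
  obtain ⟨hy, he₁⟩ := hz₁
  obtain ⟨-, he₂⟩ := hz₂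
  rw [Complex.normSq_apply] at he₁ he₂
  have hE₁ : (q₁.1 : ℂ) * ((z.re : ℂ)^2 + (z.im : ℂ)^2) + (q₁.2.1 : ℂ) * z.re + (q₁.2.2 : ℂ) = 0 := by
    have := congrArg (fun t : ℝ => (t : ℂ)) he₁
    push_cast at this ⊢
    linear_combination this
  have hE₂ : (q₂.1 : ℂ) * ((z.re : ℂ)^2 + (z.im : ℂ)^2) + (q₂.2.1 : ℂ) * z.re + (q₂.2.2 : ℂ) = 0 := by
    have := congrArg (fun t : ℝ => (t : ℂ)) he₂
    push_cast at this ⊢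
    linear_combination this
  have hzre : (z.re : ℂ) + (z.im : ℂ) * Complex.I = z := Complex.re_add_im z
  have hP : z^2 - 2 * (z.re : ℂ) * z + ((z.re : ℂ)^2 + (z.im : ℂ)^2) = 0 := by
    linear_combination ((z.re : ℂ) - (z.im : ℂ) * Complex.I - z) * hzre + (z.im : ℂ)^2 * Complex.I_sq
  have hkey : ((Wmat q₁ * Wmat q₂) 0 0 : ℂ) * z + ((Wmat q₁ * Wmat q₂) 0 1 : ℂ)
      = z * (((Wmat q₁ * Wmat q₂) 1 0 : ℂ) * z + ((Wmat q₁ * Wmat q₂) 1 1 : ℂ)) := by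
    rw [hM00, hM01, hM10, hM11]
    push_cast
    linear_combination (-2 * ((q₂.1 : ℂ) * q₁.2.1 - (q₁.1 : ℂ) * q₂.2.1)) * hP +
      (-4 * (q₂.1 : ℂ) * z - 2 * (q₂.2.1 : ℂ)) * hE₁ +
      (4 * (q₁.1 : ℂ) * z + 2 * (q₁.2.1 : ℂ)) * hE₂
  have hne : ((Wmat q₁ * Wmat q₂) 1 0 : ℂ) * z + ((Wmat q₁ * Wmat q₂) 1 1 : ℂ) ≠ 0 := by
    intro h0
    have him : ((Wmat q₁ * Wmat q₂) 1 0 : ℝ) * z.im = 0 := by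
      have := congrArg Complex.im h0
      simpa using this
    have hc : ((Wmat q₁ * Wmat q₂) 1 0 : ℤ) = 0 := by
      rcases mul_eq_zero.mp him with h' | h'
      · exact_mod_cast h'
      · exact absurd h' (ne_of_gt hy)
    have hd : ((Wmat q₁ * Wmat q₂) 1 1 : ℤ) = 0 := by
      have := congrArg Complex.re h0
      simp [hc] at this
      exact_mod_cast this
    have : (Wmat q₁ * Wmat q₂).det = 0 := by
      rw [Matrix.det_fin_two, hc, hd]; ring
    rw [hdet] at this
    omega
  exact ⟨hne, by rw [hkey, mul_div_assoc, div_self hne, mul_one]⟩
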